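/- For any flow f with route of at most K_max links, the total queue backlog along the route is bounded: Σ_{n∈R(f)} Q^f_n ≤ (K_max/μ_{L(f)}) Σ_{(n,m)∈L} μ_{nm} max_{g:(n,m)∈L(g)} (Q^g_n − Q^g_m)⁺, where μ_{L(f)} > 0 is the minimum of μ_{nm} over links (n,m) ∈ L(f). -/
import Mathlib


open Finset

private lemma tele_aux {Node : Type*} (Q : Node → ℝ) :
    ∀ (l : List Node) (hl : l ≠ []) (n : Node), n ∈ l →
      Q n ≤ Q (l.getLast hl) + ((l.zip l.tail).map (fun p => max (Q p.1 - Q p.2) 0)).sum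
  | [], hl, _, _ => absurd rfl hl
  | [a], _, n, hn => by
      simp only [List.mem_singleton] at hn
      simp [hn]
  | a :: b :: t, _, n, hn => by
      have hbt : (b :: t : List Node) ≠ [] := by simp
      have hlast : ((a :: b :: t).getLast (by simp)) = (b :: t).getLast hbt := by
        simp [List.getLast_cons]
      rw [show ((a :: b :: t).zip (a :: b :: t).tail) = (a, b) :: ((b :: t).zip t) by simp]
      rw [List.map_cons, List.sum_cons]
      rcases List.mem_cons.mp hn with h | h
      · have hb := tele_aux Q (b :: t) hbt b (by simp)
        have : Q a ≤ max (Q a - Q b) 0 + Q b := by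
          have := le_max_left (Q a - Q b) 0
          linarith
        rw [hlast]
        simp only [List.tail_cons] at hb ⊢
        subst h
        linarith
      · have := tele_aux Q (b :: t) hbt n h
        have hnn : (0:ℝ) ≤ max (Q a - Q b) 0 := le_max_right _ _
        rw [hlast]
        simp only [List.tail_cons] at this ⊢
        linarith

private lemma zip_tail_nodup {Node : Type*} :
    ∀ (l : List Node), l.Nodup → (l.zip l.tail).Nodup
  | [], _ => by simp
  | [_], _ => by simp
  | a :: b :: t, h => by
      rw [show ((a :: b :: t).zip (a :: b :: t).tail) = (a, b) :: ((b :: t).zip t) by simp]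
      rw [List.nodup_cons]
      constructor
      · intro hmem
        have := (List.of_mem_zip hmem).1
        exact (List.nodup_cons.mp h).1 this
      · have := zip_tail_nodup (b :: t) (List.nodup_cons.mp h).2
        simpa using this

/-- Total backlog along a flow's route of at most `K_max` links is bounded by
`(K_max/μ_{L(f)}) ∑_{(n,m)∈L} μ_{nm} max_{g:(n,m)∈L(g)} (Q^g_n − Q^g_m)⁺`,
where `μ_{L(f)} > 0` is the minimum link rate on the route of `f`. -/
theorem stmt_9 {F Node : Type*} [Fintype F] [DecidableEq F]
    [Fintype Node] [DecidableEq Node]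
    (route : F → List Node) (hne : ∀ g, route g ≠ [])
    (hnodup : ∀ g, (route g).Nodup)
    (Ledges : Finset (Node × Node))
    (hroute : ∀ g, ∀ nm ∈ (route g).zip (route g).tail, nm ∈ Ledges)
    (Kmax : ℕ) (hK : 1 ≤ Kmax)
    (Q : F → Node → ℝ) (hQ : ∀ g n, 0 ≤ Q g n)
    (hdest : ∀ g, Q g ((route g).getLast (hne g)) = 0)
    (μ : Node × Node → ℝ) (hμ : ∀ nm ∈ Ledges, 0 ≤ μ nm)
    (f : F) (hlen : (route f).length ≤ Kmax + 1)
    (μL : ℝ) (hμL : 0 < μL)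
    (hmin : ∀ nm ∈ (route f).zip (route f).tail, μL ≤ μ nm) :
    ∑ n ∈ (route f).toFinset, Q f n ≤
      ((Kmax : ℝ) / μL) * ∑ nm ∈ Ledges, μ nm *
        (univ.filter (fun g => nm ∈ (route g).zip (route g).tail)).fold max 0
          (fun g => max (Q g nm.1 - Q g nm.2) 0) := by
  classical
  have hd : Q f ((route f).getLast (hne f)) = 0 := hdest f
  set zl := (route f).zip (route f).tail with hzl
  set E : Finset (Node × Node) := zl.toFinset with hE
  set M : Node × Node → ℝ := fun nm =>
    (univ.filter (fun g => nm ∈ (route g).zip (route g).tail)).fold max 0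
      (fun g => max (Q g nm.1 - Q g nm.2) 0) with hM
  have hznd : zl.Nodup := zip_tail_nodup (route f) (hnodup f)
  set S : ℝ := ∑ nm ∈ E, max (Q f nm.1 - Q f nm.2) 0 with hS
  have hSlist : S = (zl.map (fun p => max (Q f p.1 - Q f p.2) 0)).sum := by
    rw [hS, List.sum_toFinset _ hznd]
  have hSnn : 0 ≤ S := Finset.sum_nonneg fun nm _ => le_max_right _ _
  have hQle : ∀ n ∈ (route f).toFinset, Q f n ≤ S := by
    intro n hn
    rw [List.mem_toFinset] at hn
    have := tele_aux (Q f) (route f) (hne f) n hn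
    rw [hSlist]
    rw [hd] at this
    linarith
  have hcard : (route f).toFinset.card = (route f).length :=
    List.toFinset_card_of_nodup (hnodup f)
  have hlastmem : (route f).getLast (hne f) ∈ (route f).toFinset :=
    List.mem_toFinset.mpr (List.getLast_mem _)
  have step1 : ∑ n ∈ (route f).toFinset, Q f n ≤ (Kmax : ℝ) * S := by
    have hsplit : ∑ n ∈ (route f).toFinset, Q f n
        = ∑ n ∈ (route f).toFinset.erase ((route f).getLast (hne f)), Q f n := by
      rw [← Finset.add_sum_erase _ _ hlastmem, hd, zero_add]
    rw [hsplit]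
    calc ∑ n ∈ (route f).toFinset.erase ((route f).getLast (hne f)), Q f n
        ≤ ((route f).toFinset.erase ((route f).getLast (hne f))).card • S := by
          apply Finset.sum_le_card_nsmul
          intro n hn
          exact hQle n (Finset.mem_of_mem_erase hn)
      _ ≤ (Kmax : ℝ) * S := by
          rw [nsmul_eq_mul]
          apply mul_le_mul_of_nonneg_right _ hSnn
          rw [Finset.card_erase_of_mem hlastmem, hcard]
          have hlen' : (route f).length - 1 ≤ Kmax := by omega
          exact_mod_cast hlen'
  have hMnn : ∀ nm, 0 ≤ M nm := by
    intro nm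
    exact (Finset.le_fold_max _).mpr (Or.inl le_rfl)
  have hposM : ∀ nm ∈ E, max (Q f nm.1 - Q f nm.2) 0 ≤ M nm := by
    intro nm hnm
    rw [hE, List.mem_toFinset] at hnm
    exact (Finset.le_fold_max _).mpr
      (Or.inr ⟨f, Finset.mem_filter.mpr ⟨Finset.mem_univ f, hnm⟩, le_rfl⟩)
  have step2 : μL * S ≤ ∑ nm ∈ Ledges, μ nm * M nm := by
    rw [hS, Finset.mul_sum]
    have h1 : ∑ nm ∈ E, μL * max (Q f nm.1 - Q f nm.2) 0 ≤ ∑ nm ∈ E, μ nm * M nm := by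
      apply Finset.sum_le_sum
      intro nm hnm
      have hmem : nm ∈ zl := by rwa [hE, List.mem_toFinset] at hnm
      exact mul_le_mul (hmin nm hmem) (hposM nm hnm) (le_max_right _ _)
        ((hμL.le).trans (hmin nm hmem))
    have h2 : ∑ nm ∈ E, μ nm * M nm ≤ ∑ nm ∈ Ledges, μ nm * M nm := by
      apply Finset.sum_le_sum_of_subset_of_nonneg
      · intro nm hnm
        rw [hE, List.mem_toFinset] at hnm
        exact hroute f nm hnm
      · intro nm hnm _
        exact mul_nonneg (hμ nm hnm) (hMnn nm)
    linarith
  have hSsum : S ≤ (1 / μL) * ∑ nm ∈ Ledges, μ nm * M nm := by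
    rw [mul_comm, ← div_eq_mul_one_div, le_div_iff₀ hμL]
    linarith
  calc ∑ n ∈ (route f).toFinset, Q f n ≤ (Kmax : ℝ) * S := step1
    _ ≤ (Kmax : ℝ) * ((1 / μL) * ∑ nm ∈ Ledges, μ nm * M nm) :=
        mul_le_mul_of_nonneg_left hSsum (by positivity)
    _ = ((Kmax : ℝ) / μL) * ∑ nm ∈ Ledges, μ nm * M nm := by ring
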